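/- arXiv:1901.09788 — 8 statements merged into one kernel-verified Lean document; each statement's English description precedes it below -/
import Mathlib

section
/- There exists a function u ∈ C²(ℝ²) that is not affine (i.e. not of the form u(x,y) = ax + by + c) and satisfies the equation (1 + u_x²)·u_xx + 2·u_x·u_y·u_xy + (1 + u_y²)·u_yy = 0 at every point of ℝ². -/
open Filter

noncomputable section

def h (t : ℝ) : ℝ := t + t ^ 3 / 3

lemma h_sm : StrictMono h :=
  strictMono_id.add ((Odd.strictMono_pow (by decide : Odd 3)).div_const (by norm_num))

lemma h_cont : Continuous h := by unfold h; continuity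

lemma h_surj : Function.Surjective h := by
  apply h_cont.surjective
  · apply Tendsto.atTop_add_atTop tendsto_id
    exact (tendsto_pow_atTop (by norm_num)).atTop_div_const (by norm_num)
  · have cube : Tendsto (fun t : ℝ => t ^ 3) atBot atBot := by
      have h1 : Tendsto (fun t : ℝ => (-t) ^ 3) atBot atTop :=
        (tendsto_pow_atTop (by norm_num)).comp tendsto_neg_atBot_atTop
      have h2 := tendsto_neg_atTop_atBot.comp h1
      have : (fun t : ℝ => -((-t) ^ 3)) = fun t : ℝ => t ^ 3 := by
        funext t; ring
      rwa [← this]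
    exact Tendsto.atBot_add_atBot tendsto_id (cube.atBot_div_const (by norm_num))

def e : ℝ ≃o ℝ := StrictMono.orderIsoOfSurjective h h_sm h_surj

def g : ℝ → ℝ := e.symm

lemma g_cont : Continuous g := e.symm.continuous

lemma hg (x : ℝ) : h (g x) = x := e.apply_symm_apply x

lemma gh (x : ℝ) : g (h x) = x := e.symm_apply_apply x

lemma hasDerivAt_h (x : ℝ) : HasDerivAt h (1 + x ^ 2) x := by
  have : HasDerivAt h (1 + 3 * x ^ 2 / 3) x := by
    unfold h
    exact (hasDerivAt_id x).add (((hasDerivAt_pow 3 x).div_const 3).congr_deriv (by ring))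
  convert this using 1; ring

lemma one_add_sq_ne (x : ℝ) : (1 : ℝ) + x ^ 2 ≠ 0 := by positivity

lemma hasDerivAt_g (x : ℝ) : HasDerivAt g (1 + (g x) ^ 2)⁻¹ x :=
  HasDerivAt.of_local_left_inverse (g_cont.continuousAt) (hasDerivAt_h (g x))
    (one_add_sq_ne _) (Eventually.of_forall hg)

lemma deriv_g : deriv g = fun x => (1 + (g x) ^ 2)⁻¹ :=
  funext fun x => (hasDerivAt_g x).deriv

lemma cd2_g : ContDiff ℝ 2 g := by
  have diffg : Differentiable ℝ g := fun x => (hasDerivAt_g x).differentiableAt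
  have cd1 : ContDiff ℝ 1 g := by
    rw [contDiff_one_iff_deriv]
    refine ⟨diffg, ?_⟩
    rw [deriv_g]
    exact (continuous_const.add (g_cont.pow 2)).inv₀ (fun x => one_add_sq_ne _)
  rw [show (2 : WithTop ℕ∞) = 1 + 1 from by norm_num, contDiff_succ_iff_deriv]
  refine ⟨diffg, by simp, ?_⟩
  rw [deriv_g]
  exact (contDiff_const.add (cd1.pow 2)).inv (fun x => one_add_sq_ne _)

def φ (x : ℝ) : ℝ := ∫ t in (0:ℝ)..x, g t

lemma hasDerivAt_φ (x : ℝ) : HasDerivAt φ (g x) x := by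
  exact intervalIntegral.integral_hasDerivAt_right
    (g_cont.intervalIntegrable 0 x)
    (g_cont.aestronglyMeasurable.stronglyMeasurableAtFilter)
    g_cont.continuousAt

lemma cd2_φ : ContDiff ℝ 2 φ := by
  rw [show (2 : WithTop ℕ∞) = 1 + 1 from by norm_num, contDiff_succ_iff_deriv]
  refine ⟨fun x => (hasDerivAt_φ x).differentiableAt, by simp, ?_⟩
  have : deriv φ = g := funext fun x => (hasDerivAt_φ x).deriv
  rw [this]
  exact cd2_g.of_le (by norm_num)

end

noncomputable def ux (u : ℝ → ℝ → ℝ) (x y : ℝ) : ℝ := deriv (fun t => u t y) x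
noncomputable def uy (u : ℝ → ℝ → ℝ) (x y : ℝ) : ℝ := deriv (fun t => u x t) y
noncomputable def uxx (u : ℝ → ℝ → ℝ) (x y : ℝ) : ℝ := deriv (fun t => ux u t y) x
noncomputable def uxy (u : ℝ → ℝ → ℝ) (x y : ℝ) : ℝ := deriv (fun t => ux u x t) y
noncomputable def uyy (u : ℝ → ℝ → ℝ) (x y : ℝ) : ℝ := deriv (fun t => uy u x t) y

def IsAffine (u : ℝ → ℝ → ℝ) : Prop := ∃ a b c : ℝ, ∀ x y : ℝ, u x y = a * x + b * y + c

theorem stmt1 : ∃ u : ℝ → ℝ → ℝ,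
    ContDiff ℝ 2 (fun p : ℝ × ℝ => u p.1 p.2) ∧ ¬ IsAffine u ∧
    ∀ x y : ℝ, (1 + (ux u x y) ^ 2) * uxx u x y +
      2 * ux u x y * uy u x y * uxy u x y +
      (1 + (uy u x y) ^ 2) * uyy u x y = 0 := by
  refine ⟨fun x y => φ x - φ y, ?_, ?_, ?_⟩
  · exact (cd2_φ.comp contDiff_fst).sub (cd2_φ.comp contDiff_snd)
  · rintro ⟨a, b, c, hab⟩
    have key : ∀ x : ℝ, g x = a := by
      intro x
      have h1 : deriv (fun t : ℝ => φ t - φ 0) x = g x :=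
        ((hasDerivAt_φ x).sub_const _).deriv
      have h2 : deriv (fun t : ℝ => a * t + b * 0 + c) x = a := by
        have : HasDerivAt (fun t : ℝ => a * t + b * 0 + c) a x := by
          simpa using (((hasDerivAt_id x).const_mul a).add_const (b * 0)).add_const c
        exact this.deriv
      rw [show (fun t : ℝ => φ t - φ 0) = (fun t : ℝ => a * t + b * 0 + c) from
        funext fun t => hab t 0] at h1
      rw [h2] at h1
      exact h1.symm
    have k0 : g 0 = 0 := by
      have := gh 0; simpa [h] using this
    have k1 : g (4/3) = 1 := by
      have := gh 1
      norm_num [h] at this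
      exact this
    rw [key 0] at k0
    rw [key (4/3)] at k1
    rw [k0] at k1
    norm_num at k1
  · intro x y
    have hux : ∀ t s : ℝ, ux (fun x y => φ x - φ y) t s = g t := fun t s =>
      ((hasDerivAt_φ t).sub_const _).deriv
    have huy : ∀ t s : ℝ, uy (fun x y => φ x - φ y) t s = -g s := fun t s =>
      ((hasDerivAt_φ s).const_sub _).deriv
    have huxx : uxx (fun x y => φ x - φ y) x y = (1 + (g x) ^ 2)⁻¹ := by
      unfold uxx
      rw [show (fun t => ux (fun x y => φ x - φ y) t y) = g from funext fun t => hux t y]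
      exact (hasDerivAt_g x).deriv
    have huxy : uxy (fun x y => φ x - φ y) x y = 0 := by
      unfold uxy
      rw [show (fun t => ux (fun x y => φ x - φ y) x t) = fun _ => g x from
        funext fun t => hux x t]
      exact deriv_const _ _
    have huyy : uyy (fun x y => φ x - φ y) x y = -(1 + (g y) ^ 2)⁻¹ := by
      unfold uyy
      rw [show (fun t => uy (fun x y => φ x - φ y) x t) = fun t => -g t from
        funext fun t => huy x t]
      exact ((hasDerivAt_g y).neg).deriv
    rw [hux x y, huy x y, huxx, huxy, huyy]
    field_simp
    ring
end

section
/- Let h : ℝ → ℝ be twice continuously differentiable with (1 + h'(x)²)·h''(x) = 1 for all x ∈ ℝ. Then u(x,y) := h(x) − h(y) is a C² function on ℝ² satisfying (1 + u_x²)·u_xx + 2·u_x·u_y·u_xy + (1 + u_y²)·u_yy = 0 everywhere, and u is not affine. -/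
theorem stmt2 (h : ℝ → ℝ) (hC : ContDiff ℝ 2 h)
    (hode : ∀ x : ℝ, (1 + (deriv h x) ^ 2) * deriv (deriv h) x = 1)
    (u : ℝ → ℝ → ℝ) (hu : ∀ x y : ℝ, u x y = h x - h y) :
    ContDiff ℝ 2 (fun p : ℝ × ℝ => u p.1 p.2) ∧
    (∀ x y : ℝ, (1 + (ux u x y) ^ 2) * uxx u x y +
      2 * ux u x y * uy u x y * uxy u x y +
      (1 + (uy u x y) ^ 2) * uyy u x y = 0) ∧
    ¬ IsAffine u := by
  have hd : Differentiable ℝ h := hC.differentiable two_ne_zero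
  have hux : ∀ x y : ℝ, ux u x y = deriv h x := by
    intro x y
    have : (fun t => u t y) = fun t => h t - h y := by funext t; exact hu t y
    simp [ux, this, deriv_sub_const, hd x]
  have huy : ∀ x y : ℝ, uy u x y = -deriv h y := by
    intro x y
    have : (fun t => u x t) = fun t => h x - h t := by funext t; exact hu x t
    simp [uy, this, deriv_const_sub]
  have huxx : ∀ x y : ℝ, uxx u x y = deriv (deriv h) x := by
    intro x y
    have : (fun t => ux u t y) = deriv h := by funext t; exact hux t y
    simp [uxx, this]
  have huxy : ∀ x y : ℝ, uxy u x y = 0 := by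
    intro x y
    have : (fun t => ux u x t) = fun _ => deriv h x := by funext t; exact hux x t
    simp [uxy, this]
  have huyy : ∀ x y : ℝ, uyy u x y = -deriv (deriv h) y := by
    intro x y
    have : (fun t => uy u x t) = fun t => -deriv h t := by funext t; exact huy x t
    have hd2 : Differentiable ℝ (deriv h) :=
      ((contDiff_succ_iff_deriv.mp
        (show ContDiff ℝ (1 + 1) h by exact_mod_cast hC)).2.2).differentiable one_ne_zero
    simp [uyy, this, deriv.neg]
  refine ⟨?_, ?_, ?_⟩
  · have : (fun p : ℝ × ℝ => u p.1 p.2) = fun p : ℝ × ℝ => h p.1 - h p.2 := by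
      funext p; exact hu p.1 p.2
    rw [this]
    exact (hC.comp contDiff_fst).sub (hC.comp contDiff_snd)
  · intro x y
    rw [hux, huy, huxx, huxy, huyy]
    have h1 := hode x
    have h2 := hode y
    ring_nf
    ring_nf at h1 h2
    nlinarith [h1, h2]
  · rintro ⟨a, b, c, hab⟩
    have hh : ∀ x : ℝ, h x = a * x + (b * 0 + c + h 0) := by
      intro x
      have := hab x 0
      rw [hu x 0] at this
      linarith
    have hderiv : deriv h = fun _ => a := by
      funext x
      rw [funext hh]
      have := ((hasDerivAt_id x).const_mul a).add_const (b * 0 + c + h 0)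
      simpa using this.deriv
    have := hode 0
    rw [hderiv] at this
    simp at this
end

section
/- A twice continuously differentiable function h : ℝ → ℝ satisfying (1 + h'(x)²)·h''(x) = 1 for all x ∈ ℝ exists; for example, h with derivative h'(x) = (1/2^(1/3))·((√(9x²+4)+3x)^(1/3) − (√(9x²+4)−3x)^(1/3)). -/
open Real

noncomputable def gg (x : ℝ) : ℝ :=
  (1 / (2 : ℝ) ^ ((1:ℝ)/3)) *
    ((Real.sqrt (9 * x ^ 2 + 4) + 3 * x) ^ ((1:ℝ)/3) -
     (Real.sqrt (9 * x ^ 2 + 4) - 3 * x) ^ ((1:ℝ)/3))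

lemma s_sq (x : ℝ) : (Real.sqrt (9 * x ^ 2 + 4)) ^ 2 = 9 * x ^ 2 + 4 :=
  Real.sq_sqrt (by positivity)

lemma s_pos1 (x : ℝ) : 0 < Real.sqrt (9 * x ^ 2 + 4) + 3 * x := by
  have h := s_sq x
  have h0 := Real.sqrt_nonneg (9 * x ^ 2 + 4)
  nlinarith [sq_nonneg (Real.sqrt (9 * x ^ 2 + 4) + 3 * x)]

lemma s_pos2 (x : ℝ) : 0 < Real.sqrt (9 * x ^ 2 + 4) - 3 * x := by
  have h := s_sq x
  have h0 := Real.sqrt_nonneg (9 * x ^ 2 + 4)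
  nlinarith [sq_nonneg (Real.sqrt (9 * x ^ 2 + 4) - 3 * x)]

lemma cube_root_cube {t : ℝ} (ht : 0 ≤ t) : (t ^ ((1:ℝ)/3)) ^ 3 = t := by
  rw [show (1:ℝ)/3 = ((3:ℕ):ℝ)⁻¹ by norm_num]
  exact Real.rpow_inv_natCast_pow ht (by norm_num)

lemma gg_cubic (x : ℝ) : (gg x) ^ 3 + 3 * gg x = 3 * x := by
  set s := Real.sqrt (9 * x ^ 2 + 4) with hs
  set a := (s + 3 * x) ^ ((1:ℝ)/3) with hadef
  set b := (s - 3 * x) ^ ((1:ℝ)/3) with hbdef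
  set c := (2:ℝ) ^ ((1:ℝ)/3) with hcdef
  have hc0 : 0 < c := Real.rpow_pos_of_pos (by norm_num) _
  have hc3 : c ^ 3 = 2 := cube_root_cube (by norm_num)
  have ha3 : a ^ 3 = s + 3 * x := cube_root_cube (s_pos1 x).le
  have hb3 : b ^ 3 = s - 3 * x := cube_root_cube (s_pos2 x).le
  have hab : a * b = c ^ 2 := by
    have h1 : a * b = ((s + 3 * x) * (s - 3 * x)) ^ ((1:ℝ)/3) :=
      (Real.mul_rpow (s_pos1 x).le (s_pos2 x).le).symm
    have h2 : (s + 3 * x) * (s - 3 * x) = 4 := by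
      have := s_sq x; nlinarith
    have h3 : c ^ 2 = (4:ℝ) ^ ((1:ℝ)/3) := by
      rw [hcdef, ← Real.rpow_natCast ((2:ℝ) ^ ((1:ℝ)/3)) 2, ← Real.rpow_mul (by norm_num),
        show (4:ℝ) = (2:ℝ) ^ ((2:ℝ)) by norm_num, ← Real.rpow_mul (by norm_num)]
      norm_num
    rw [h1, h2, h3]
  have hgg : gg x = (a - b) / c := by
    rw [gg, ← hs, ← hadef, ← hbdef, ← hcdef]; ring
  rw [hgg]
  field_simp
  linear_combination ha3 - hb3 - 3*(a-b)*hab - 3*x*hc3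

lemma gg_cont : Continuous gg := by
  rw [continuous_iff_continuousAt]
  intro x
  apply ContinuousAt.mul continuousAt_const
  apply ContinuousAt.sub
  · exact (((Real.continuous_sqrt.comp (by continuity)).continuousAt).add
      (by fun_prop)).rpow_const (Or.inl (s_pos1 x).ne')
  · exact (((Real.continuous_sqrt.comp (by continuity)).continuousAt).sub
      (by fun_prop)).rpow_const (Or.inl (s_pos2 x).ne')

lemma gg_hasDeriv (x : ℝ) : HasDerivAt gg ((gg x ^ 2 + 1)⁻¹) x := by
  have hφ : HasDerivAt (fun y : ℝ => y ^ 3 / 3 + y) (gg x ^ 2 + 1) (gg x) := by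
    have := ((hasDerivAt_pow 3 (gg x)).div_const 3).add (hasDerivAt_id (gg x))
    refine this.congr_deriv ?_
    push_cast; ring
  exact HasDerivAt.of_local_left_inverse gg_cont.continuousAt hφ
    (by positivity)
    (Filter.Eventually.of_forall fun y => by
      have := gg_cubic y; show gg y ^ 3 / 3 + gg y = y; linarith)

theorem stmt4 : ∃ h : ℝ → ℝ, ContDiff ℝ 2 h ∧
    (∀ x : ℝ, (1 + (deriv h x) ^ 2) * deriv (deriv h) x = 1) ∧
    (∀ x : ℝ, deriv h x = (1 / (2 : ℝ) ^ ((1:ℝ)/3)) *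
      ((Real.sqrt (9 * x ^ 2 + 4) + 3 * x) ^ ((1:ℝ)/3) -
       (Real.sqrt (9 * x ^ 2 + 4) - 3 * x) ^ ((1:ℝ)/3))) := by
  refine ⟨fun x => ∫ t in (0:ℝ)..x, gg t, ?_, ?_, ?_⟩
  all_goals
    have hderiv : deriv (fun x => ∫ t in (0:ℝ)..x, gg t) = gg := by
      funext x; exact (gg_cont.integral_hasStrictDerivAt 0 x).hasDerivAt.deriv
  · rw [show (2 : WithTop ℕ∞) = (1 : ℕ∞) + 1 from rfl, contDiff_succ_iff_deriv]
    refine ⟨fun x => ((gg_cont.integral_hasStrictDerivAt 0 x).hasDerivAt.differentiableAt), ?_, ?_⟩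
    · simp
    · rw [hderiv, show ((1:ℕ∞) : WithTop ℕ∞) = 1 from rfl, contDiff_one_iff_deriv]
      have hd : deriv gg = fun x => (gg x ^ 2 + 1)⁻¹ := funext fun x => (gg_hasDeriv x).deriv
      refine ⟨fun x => (gg_hasDeriv x).differentiableAt, ?_⟩
      rw [hd]
      exact ((gg_cont.pow 2).add continuous_const).inv₀ (fun x => (by positivity : gg x ^ 2 + 1 ≠ 0))
  · intro x
    rw [hderiv, (gg_hasDeriv x).deriv]
    have h1 : gg x ^ 2 + 1 > 0 := by positivity
    field_simp
    ring
  · intro x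
    rw [hderiv]; rfl
end

section
/- Let F₁, F₂ : ℝ → ℝ be C¹ bijections with F₁'(t) > 0 and F₂'(t) > 0 for all t ∈ ℝ. Define u(x,y) = H₁(x) + H₂(y), where H₁ is an antiderivative of F₁⁻¹ and H₂ is an antiderivative of y ↦ F₂⁻¹(−y). Then u is a C² function on ℝ² that is not affine and satisfies F₁'(u_x)·u_xx + 2·B(x,y)·u_xy + F₂'(u_y)·u_yy = 0 for every function B : ℝ² → ℝ. -/
lemma inv_cont {F : ℝ → ℝ} (hm : StrictMono F) (hb : Function.Bijective F) :
    Continuous (Function.invFun F) := by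
  let e : ℝ ≃o ℝ := StrictMono.orderIsoOfSurjective F hm hb.2
  have he : Function.invFun F = ⇑e.symm := by
    funext x
    apply hb.1
    rw [Function.invFun_eq (hb.2 x)]
    exact (e.apply_symm_apply x).symm
  rw [he]
  exact e.symm.continuous

lemma inv_hasDerivAt {F : ℝ → ℝ} (hF : ContDiff ℝ 1 F) (hb : Function.Bijective F)
    (hp : ∀ t, 0 < deriv F t) (x : ℝ) :
    HasDerivAt (Function.invFun F) (deriv F (Function.invFun F x))⁻¹ x := by
  have hm : StrictMono F := strictMono_of_deriv_pos hp
  exact HasDerivAt.of_local_left_inverse ((inv_cont hm hb).continuousAt)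
    ((hF.differentiable one_ne_zero (Function.invFun F x)).hasDerivAt)
    (hp _).ne'
    (Filter.Eventually.of_forall (fun y => Function.rightInverse_invFun hb.2 y))

lemma inv_contDiff {F : ℝ → ℝ} (hF : ContDiff ℝ 1 F) (hb : Function.Bijective F)
    (hp : ∀ t, 0 < deriv F t) : ContDiff ℝ 1 (Function.invFun F) := by
  have hm : StrictMono F := strictMono_of_deriv_pos hp
  rw [contDiff_one_iff_deriv]
  have hd : deriv (Function.invFun F) = fun x => (deriv F (Function.invFun F x))⁻¹ := by
    funext x; exact (inv_hasDerivAt hF hb hp x).deriv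
  refine ⟨fun x => (inv_hasDerivAt hF hb hp x).differentiableAt, ?_⟩
  rw [hd]
  exact (((hF.continuous_deriv le_rfl).comp (inv_cont hm hb)).inv₀ (fun x => (hp _).ne'))

lemma contDiff_two_of_deriv {H g : ℝ → ℝ} (hH : ∀ x, HasDerivAt H (g x) x)
    (hg : ContDiff ℝ 1 g) : ContDiff ℝ 2 H := by
  have hd : deriv H = g := funext fun x => (hH x).deriv
  rw [show (2 : WithTop ℕ∞) = 1 + 1 from rfl, contDiff_succ_iff_deriv]
  exact ⟨fun x => (hH x).differentiableAt, by simp, by rw [hd]; exact hg⟩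

theorem stmt5 (F₁ F₂ : ℝ → ℝ) (hF₁ : ContDiff ℝ 1 F₁) (hF₂ : ContDiff ℝ 1 F₂)
    (hb₁ : Function.Bijective F₁) (hb₂ : Function.Bijective F₂)
    (hp₁ : ∀ t : ℝ, 0 < deriv F₁ t) (hp₂ : ∀ t : ℝ, 0 < deriv F₂ t)
    (H₁ H₂ : ℝ → ℝ)
    (hH₁ : ∀ x : ℝ, HasDerivAt H₁ (Function.invFun F₁ x) x)
    (hH₂ : ∀ y : ℝ, HasDerivAt H₂ (Function.invFun F₂ (-y)) y)
    (u : ℝ → ℝ → ℝ) (hu : ∀ x y : ℝ, u x y = H₁ x + H₂ y) :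
    ContDiff ℝ 2 (fun p : ℝ × ℝ => u p.1 p.2) ∧ ¬ IsAffine u ∧
    ∀ B : ℝ → ℝ → ℝ, ∀ x y : ℝ,
      deriv F₁ (ux u x y) * uxx u x y + 2 * B x y * uxy u x y +
      deriv F₂ (uy u x y) * uyy u x y = 0 := by
  -- smoothness
  have hc₁ : ContDiff ℝ 2 H₁ := contDiff_two_of_deriv hH₁ (inv_contDiff hF₁ hb₁ hp₁)
  have hc₂ : ContDiff ℝ 2 H₂ := by
    refine contDiff_two_of_deriv hH₂ ?_
    exact (inv_contDiff hF₂ hb₂ hp₂).comp (contDiff_neg)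
  have hsm : ContDiff ℝ 2 (fun p : ℝ × ℝ => u p.1 p.2) := by
    have : (fun p : ℝ × ℝ => u p.1 p.2) = fun p : ℝ × ℝ => H₁ p.1 + H₂ p.2 := by
      funext p; exact hu p.1 p.2
    rw [this]
    exact (hc₁.comp contDiff_fst).add (hc₂.comp contDiff_snd)
  -- key derivative facts
  have hux : ∀ x y : ℝ, ux u x y = Function.invFun F₁ x := by
    intro x y
    have : (fun t => u t y) = fun t => H₁ t + H₂ y := funext fun t => hu t y
    rw [ux, this]
    exact ((hH₁ x).add_const (H₂ y)).deriv
  have huy : ∀ x y : ℝ, uy u x y = Function.invFun F₂ (-y) := by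
    intro x y
    have : (fun t => u x t) = fun t => H₁ x + H₂ t := funext fun t => hu x t
    rw [uy, this]
    exact ((hH₂ y).const_add (H₁ x)).deriv
  have huxx : ∀ x y : ℝ, uxx u x y = (deriv F₁ (Function.invFun F₁ x))⁻¹ := by
    intro x y
    have : (fun t => ux u t y) = Function.invFun F₁ := funext fun t => hux t y
    rw [uxx, this]
    exact (inv_hasDerivAt hF₁ hb₁ hp₁ x).deriv
  have huxy : ∀ x y : ℝ, uxy u x y = 0 := by
    intro x y
    have : (fun t => ux u x t) = fun _ => Function.invFun F₁ x := funext fun t => hux x t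
    rw [uxy, this, deriv_const]
  have huyy : ∀ x y : ℝ, uyy u x y = -(deriv F₂ (Function.invFun F₂ (-y)))⁻¹ := by
    intro x y
    have : (fun t => uy u x t) = fun t => Function.invFun F₂ (-t) := funext fun t => huy x t
    rw [uyy, this]
    have h : HasDerivAt (fun t => Function.invFun F₂ (-t))
        ((deriv F₂ (Function.invFun F₂ (-y)))⁻¹ * (-1)) y :=
      (inv_hasDerivAt hF₂ hb₂ hp₂ (-y)).comp y (hasDerivAt_neg y)
    rw [h.deriv]; ring
  refine ⟨hsm, ?_, ?_⟩
  · rintro ⟨a, b, c, habc⟩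
    have h0 : ux u 0 0 = a := by
      have : (fun t => u t 0) = fun t => a * t + b * 0 + c := funext fun t => habc t 0
      rw [ux, this]
      have hd : HasDerivAt (fun t => a * t + b * 0 + c) (a * 1) (0:ℝ) :=
        (((hasDerivAt_id (0:ℝ)).const_mul a).add_const (b*0)).add_const c
      rw [hd.deriv]; ring
    have h1 : ux u 1 0 = a := by
      have : (fun t => u t 0) = fun t => a * t + b * 0 + c := funext fun t => habc t 0
      rw [ux, this]
      have hd : HasDerivAt (fun t => a * t + b * 0 + c) (a * 1) (1:ℝ) :=
        (((hasDerivAt_id (1:ℝ)).const_mul a).add_const (b*0)).add_const c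
      rw [hd.deriv]; ring
    have : Function.invFun F₁ 0 = Function.invFun F₁ 1 := by
      rw [← hux 0 0, ← hux 1 0, h0, h1]
    have hinj : Function.Injective (Function.invFun F₁) :=
      Function.LeftInverse.injective (Function.rightInverse_invFun hb₁.2)
    exact zero_ne_one (hinj this)
  · intro B x y
    rw [hux, huy, huxx, huxy, huyy, mul_zero, mul_inv_cancel₀ (hp₁ _).ne',
      mul_neg, mul_inv_cancel₀ (hp₂ _).ne']
    ring
end

section
/- Let F₁, F₂ : ℝ → ℝ be C¹ bijections with positive derivatives f₁ = F₁' and f₂ = F₂'. Let u(x,y) = H₁(x) + H₂(y) with H₁' = F₁⁻¹ and H₂'(y) = F₂⁻¹(−y). Then u satisfies u_xx / f₂(u_y) + 2·B̃(x,y)·u_xy + u_yy / f₁(u_x) = 0 on ℝ² for any function B̃ : ℝ² → ℝ, and u is not affine. -/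
lemma invFun_hasDerivAt (F : ℝ → ℝ) (hF : ContDiff ℝ 1 F) (hb : Function.Bijective F)
    (hp : ∀ t : ℝ, 0 < deriv F t) (a : ℝ) :
    HasDerivAt (Function.invFun F) (deriv F (Function.invFun F a))⁻¹ a := by
  have hmono : StrictMono F := strictMono_of_deriv_pos hp
  set e := StrictMono.orderIsoOfSurjective F hmono hb.2
  have hinv : Function.invFun F = ⇑e.symm := by
    funext x
    apply hb.1
    rw [Function.rightInverse_invFun hb.2 x]
    exact (StrictMono.orderIsoOfSurjective_self_symm_apply F hmono hb.2 x).symm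
  have hcont : ContinuousAt (Function.invFun F) a := by
    rw [hinv]; exact e.symm.continuous.continuousAt
  have hdF : HasDerivAt F (deriv F (Function.invFun F a)) (Function.invFun F a) :=
    ((hF.differentiable one_ne_zero) _).hasDerivAt
  exact HasDerivAt.of_local_left_inverse hcont hdF (hp _).ne'
    (Filter.Eventually.of_forall fun y => Function.rightInverse_invFun hb.2 y)

theorem stmt7 (F₁ F₂ : ℝ → ℝ) (hF₁ : ContDiff ℝ 1 F₁) (hF₂ : ContDiff ℝ 1 F₂)
    (hb₁ : Function.Bijective F₁) (hb₂ : Function.Bijective F₂)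
    (hp₁ : ∀ t : ℝ, 0 < deriv F₁ t) (hp₂ : ∀ t : ℝ, 0 < deriv F₂ t)
    (H₁ H₂ : ℝ → ℝ)
    (hH₁ : ∀ x : ℝ, HasDerivAt H₁ (Function.invFun F₁ x) x)
    (hH₂ : ∀ y : ℝ, HasDerivAt H₂ (Function.invFun F₂ (-y)) y)
    (u : ℝ → ℝ → ℝ) (hu : ∀ x y : ℝ, u x y = H₁ x + H₂ y) :
    (∀ B : ℝ → ℝ → ℝ, ∀ x y : ℝ,
      uxx u x y / deriv F₂ (uy u x y) + 2 * B x y * uxy u x y +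
      uyy u x y / deriv F₁ (ux u x y) = 0) ∧ ¬ IsAffine u := by
  -- first derivatives
  have hux : ∀ x y : ℝ, ux u x y = Function.invFun F₁ x := by
    intro x y
    have : HasDerivAt (fun t => u t y) (Function.invFun F₁ x) x := by
      have := (hH₁ x).add_const (H₂ y)
      exact this.congr_of_eventuallyEq (Filter.Eventually.of_forall fun t => (hu t y))
    exact this.deriv
  have huy : ∀ x y : ℝ, uy u x y = Function.invFun F₂ (-y) := by
    intro x y
    have : HasDerivAt (fun t => u x t) (Function.invFun F₂ (-y)) y := by
      have := (hH₂ y).const_add (H₁ x)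
      exact this.congr_of_eventuallyEq (Filter.Eventually.of_forall fun t => (hu x t))
    exact this.deriv
  have huxx : ∀ x y : ℝ, uxx u x y = (deriv F₁ (Function.invFun F₁ x))⁻¹ := by
    intro x y
    have h : HasDerivAt (fun t => ux u t y) (deriv F₁ (Function.invFun F₁ x))⁻¹ x :=
      (invFun_hasDerivAt F₁ hF₁ hb₁ hp₁ x).congr_of_eventuallyEq
        (Filter.Eventually.of_forall fun t => (hux t y))
    exact h.deriv
  have huxy : ∀ x y : ℝ, uxy u x y = 0 := by
    intro x y
    have : (fun t => ux u x t) = fun _ => Function.invFun F₁ x := funext fun t => hux x t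
    rw [uxy, this, deriv_const]
  have huyy : ∀ x y : ℝ, uyy u x y = -(deriv F₂ (Function.invFun F₂ (-y)))⁻¹ := by
    intro x y
    have h1 : HasDerivAt (fun t : ℝ => Function.invFun F₂ (-t))
        (-(deriv F₂ (Function.invFun F₂ (-y)))⁻¹) y := by
      have := (invFun_hasDerivAt F₂ hF₂ hb₂ hp₂ (-y)).comp y (hasDerivAt_neg y)
      simp only [mul_neg, mul_one] at this
      exact this
    have h : HasDerivAt (fun t => uy u x t) (-(deriv F₂ (Function.invFun F₂ (-y)))⁻¹) y :=
      h1.congr_of_eventuallyEq (Filter.Eventually.of_forall fun t => (huy x t))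
    exact h.deriv
  constructor
  · intro B x y
    rw [huxx, huxy, huyy, hux, huy]
    have h1 := (hp₁ (Function.invFun F₁ x)).ne'
    have h2 := (hp₂ (Function.invFun F₂ (-y))).ne'
    field_simp
    ring
  · rintro ⟨a, b, c, habc⟩
    have h0 : ∀ x y : ℝ, ux u x y = a := by
      intro x y
      have : (fun t => u t y) = fun t => a * t + (b * y + c) := by
        funext t; rw [habc t y]; ring
      have h : HasDerivAt (fun t : ℝ => a * t + (b * y + c)) a x := by
        simpa using ((hasDerivAt_id x).const_mul a).add_const (b * y + c)
      rw [ux, this]; exact h.deriv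
    have hinj : Function.invFun F₁ 0 ≠ Function.invFun F₁ 1 := by
      intro h
      have := congrArg F₁ h
      rw [Function.rightInverse_invFun hb₁.2, Function.rightInverse_invFun hb₁.2] at this
      norm_num at this
    apply hinj
    rw [← hux 0 0, ← hux 1 0, h0, h0]
end

section
/- The function u(x,y) = cosh(x) − cosh(y) is a non-affine C² function on ℝ² satisfying u_xx / √(1 + u_x²) + u_yy / √(1 + u_y²) = 0 at every point of ℝ². -/
theorem stmt9 (u : ℝ → ℝ → ℝ) (hu : ∀ x y : ℝ, u x y = Real.cosh x - Real.cosh y) :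
    ContDiff ℝ 2 (fun p : ℝ × ℝ => u p.1 p.2) ∧ ¬ IsAffine u ∧
    ∀ x y : ℝ, uxx u x y / Real.sqrt (1 + (ux u x y) ^ 2) +
      uyy u x y / Real.sqrt (1 + (uy u x y) ^ 2) = 0 := by
  have hux : ∀ x y : ℝ, ux u x y = Real.sinh x := by
    intro x y
    have : (fun t => u t y) = fun t => Real.cosh t - Real.cosh y := by
      funext t; exact hu t y
    simp [ux, this, deriv_sub_const]
  have huy : ∀ x y : ℝ, uy u x y = -Real.sinh y := by
    intro x y
    have : (fun t => u x t) = fun t => Real.cosh x - Real.cosh t := by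
      funext t; exact hu x t
    have hd : HasDerivAt (fun t => Real.cosh x - Real.cosh t) (-Real.sinh y) y := by
      simpa using (Real.hasDerivAt_cosh y).const_sub (Real.cosh x)
    rw [uy, this, hd.deriv]
  have huxx : ∀ x y : ℝ, uxx u x y = Real.cosh x := by
    intro x y
    have : (fun t => ux u t y) = Real.sinh := by funext t; exact hux t y
    simp [uxx, this]
  have huyy : ∀ x y : ℝ, uyy u x y = -Real.cosh y := by
    intro x y
    have : (fun t => uy u x t) = fun t => -Real.sinh t := by funext t; exact huy x t
    have hd : HasDerivAt (fun t => -Real.sinh t) (-Real.cosh y) y := by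
      exact (Real.hasDerivAt_sinh y).neg
    rw [uyy, this, hd.deriv]
  have hsqrt : ∀ x : ℝ, Real.sqrt (1 + Real.sinh x ^ 2) = Real.cosh x := by
    intro x
    rw [show (1 : ℝ) + Real.sinh x ^ 2 = Real.cosh x ^ 2 by rw [Real.cosh_sq]; ring]
    exact Real.sqrt_sq (Real.cosh_pos x).le
  refine ⟨?_, ?_, ?_⟩
  · have : (fun p : ℝ × ℝ => u p.1 p.2) = fun p : ℝ × ℝ => Real.cosh p.1 - Real.cosh p.2 := by
      funext p; exact hu p.1 p.2
    rw [this]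
    exact (Real.contDiff_cosh.comp contDiff_fst).sub (Real.contDiff_cosh.comp contDiff_snd)
  · rintro ⟨a, b, c, h⟩
    have h0 := h 0 0
    have h1 := h 1 0
    have h2 := h (-1) 0
    simp [hu] at h0 h1 h2
    have : Real.cosh 1 = 1 := by nlinarith [Real.cosh_neg 1]
    nlinarith [Real.cosh_pos 1, Real.one_lt_cosh.mpr (one_ne_zero)]
  · intro x y
    rw [huxx, huyy, hux, huy, neg_sq, hsqrt, hsqrt,
      div_self (Real.cosh_pos x).ne']
    rw [neg_div, div_self (Real.cosh_pos y).ne']; ring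
end

section
/- The function u(x,y) = (9/4)·(|x|^(4/3) − |y|^(4/3)) satisfies u_x²·u_xx + 2·u_x·u_y·u_xy + u_y²·u_yy = 0 at every point (x,y) ∈ ℝ² with x ≠ 0 and y ≠ 0. -/
lemma habs (x : ℝ) (hx : x ≠ 0) :
    HasDerivAt (fun t : ℝ => |t| ^ ((4:ℝ)/3)) ((4/3) * Real.sign x * |x| ^ ((1:ℝ)/3)) x := by
  rcases hx.lt_or_gt with h | h
  · have h1 : HasDerivAt (fun t : ℝ => (-t) ^ ((4:ℝ)/3))
        (((4:ℝ)/3 * (-x) ^ ((4:ℝ)/3 - 1)) * (-1)) x := by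
      exact (Real.hasDerivAt_rpow_const (x := -x) (p := (4:ℝ)/3)
        (Or.inl (by linarith))).comp x (hasDerivAt_neg x)
    have h2 : (fun t : ℝ => |t| ^ ((4:ℝ)/3)) =ᶠ[nhds x] fun t => (-t) ^ ((4:ℝ)/3) := by
      filter_upwards [eventually_lt_nhds h] with t ht
      rw [abs_of_neg ht]
    have := h1.congr_of_eventuallyEq h2
    refine this.congr_deriv (Eq.symm ?_)
    rw [Real.sign_of_neg h, abs_of_neg h]
    norm_num
  · have h1 := Real.hasDerivAt_rpow_const (x := x) (p := (4:ℝ)/3) (Or.inl h.ne')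
    have h2 : (fun t : ℝ => |t| ^ ((4:ℝ)/3)) =ᶠ[nhds x] fun t => t ^ ((4:ℝ)/3) := by
      filter_upwards [eventually_gt_nhds h] with t ht
      rw [abs_of_pos ht]
    have := h1.congr_of_eventuallyEq h2
    refine this.congr_deriv (Eq.symm ?_)
    rw [Real.sign_of_pos h, abs_of_pos h]
    norm_num

lemma ux_eq (u : ℝ → ℝ → ℝ)
    (hu : ∀ x y : ℝ, u x y = (9/4) * (|x| ^ ((4:ℝ)/3) - |y| ^ ((4:ℝ)/3)))
    (x : ℝ) (hx : x ≠ 0) (y : ℝ) :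
    ux u x y = 3 * Real.sign x * |x| ^ ((1:ℝ)/3) := by
  have hfun : (fun t => u t y) = fun t => (9/4) * (|t| ^ ((4:ℝ)/3) - |y| ^ ((4:ℝ)/3)) :=
    funext fun t => hu t y
  have hd : HasDerivAt (fun t => (9/4) * (|t| ^ ((4:ℝ)/3) - |y| ^ ((4:ℝ)/3)))
      (3 * Real.sign x * |x| ^ ((1:ℝ)/3)) x := by
    have := ((habs x hx).sub_const (|y| ^ ((4:ℝ)/3))).const_mul (9/4 : ℝ)
    refine this.congr_deriv (Eq.symm ?_)
    ring
  rw [ux, hfun, hd.deriv]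

lemma uy_eq (u : ℝ → ℝ → ℝ)
    (hu : ∀ x y : ℝ, u x y = (9/4) * (|x| ^ ((4:ℝ)/3) - |y| ^ ((4:ℝ)/3)))
    (x y : ℝ) (hy : y ≠ 0) :
    uy u x y = -(3 * Real.sign y * |y| ^ ((1:ℝ)/3)) := by
  have hfun : (fun t => u x t) = fun t => (9/4) * (|x| ^ ((4:ℝ)/3) - |t| ^ ((4:ℝ)/3)) :=
    funext fun t => hu x t
  have hd : HasDerivAt (fun t => (9/4) * (|x| ^ ((4:ℝ)/3) - |t| ^ ((4:ℝ)/3)))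
      (-(3 * Real.sign y * |y| ^ ((1:ℝ)/3))) y := by
    have := ((hasDerivAt_const y (|x| ^ ((4:ℝ)/3))).sub (habs y hy)).const_mul (9/4 : ℝ)
    refine this.congr_deriv (Eq.symm ?_)
    ring
  rw [uy, hfun, hd.deriv]

lemma uxy_eq (u : ℝ → ℝ → ℝ)
    (hu : ∀ x y : ℝ, u x y = (9/4) * (|x| ^ ((4:ℝ)/3) - |y| ^ ((4:ℝ)/3)))
    (x : ℝ) (hx : x ≠ 0) (y : ℝ) :
    uxy u x y = 0 := by
  have hfun : (fun t => ux u x t) = fun _ => 3 * Real.sign x * |x| ^ ((1:ℝ)/3) :=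
    funext fun t => ux_eq u hu x hx t
  rw [uxy, hfun, deriv_const]

lemma uxx_eq (u : ℝ → ℝ → ℝ)
    (hu : ∀ x y : ℝ, u x y = (9/4) * (|x| ^ ((4:ℝ)/3) - |y| ^ ((4:ℝ)/3)))
    (x : ℝ) (hx : x ≠ 0) (y : ℝ) :
    uxx u x y = |x| ^ (-(2:ℝ)/3) := by
  rcases hx.lt_or_gt with h | h
  · have heq : (fun t => ux u t y) =ᶠ[nhds x] fun t => -3 * (-t) ^ ((1:ℝ)/3) := by
      filter_upwards [eventually_lt_nhds h] with t ht
      rw [ux_eq u hu t ht.ne y, Real.sign_of_neg ht, abs_of_neg ht]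
      ring
    have hd : HasDerivAt (fun t : ℝ => -3 * (-t) ^ ((1:ℝ)/3))
        (|x| ^ (-(2:ℝ)/3)) x := by
      have h1 : HasDerivAt (fun t : ℝ => (-t) ^ ((1:ℝ)/3))
          (((1:ℝ)/3 * (-x) ^ ((1:ℝ)/3 - 1)) * (-1)) x :=
        (Real.hasDerivAt_rpow_const (x := -x) (p := (1:ℝ)/3)
          (Or.inl (by linarith))).comp x (hasDerivAt_neg x)
      have := h1.const_mul (-3 : ℝ)
      refine this.congr_deriv (Eq.symm ?_)
      rw [abs_of_neg h]
      norm_num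
      ring
    rw [uxx, heq.deriv_eq, hd.deriv]
  · have heq : (fun t => ux u t y) =ᶠ[nhds x] fun t => 3 * t ^ ((1:ℝ)/3) := by
      filter_upwards [eventually_gt_nhds h] with t ht
      rw [ux_eq u hu t ht.ne' y, Real.sign_of_pos ht, abs_of_pos ht]
      ring
    have hd : HasDerivAt (fun t : ℝ => 3 * t ^ ((1:ℝ)/3)) (|x| ^ (-(2:ℝ)/3)) x := by
      have := (Real.hasDerivAt_rpow_const (x := x) (p := (1:ℝ)/3) (Or.inl h.ne')).const_mul
        (3 : ℝ)
      refine this.congr_deriv (Eq.symm ?_)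
      rw [abs_of_pos h]
      norm_num
      ring
    rw [uxx, heq.deriv_eq, hd.deriv]

lemma uyy_eq (u : ℝ → ℝ → ℝ)
    (hu : ∀ x y : ℝ, u x y = (9/4) * (|x| ^ ((4:ℝ)/3) - |y| ^ ((4:ℝ)/3)))
    (x y : ℝ) (hy : y ≠ 0) :
    uyy u x y = -(|y| ^ (-(2:ℝ)/3)) := by
  rcases hy.lt_or_gt with h | h
  · have heq : (fun t => uy u x t) =ᶠ[nhds y] fun t => 3 * (-t) ^ ((1:ℝ)/3) := by
      filter_upwards [eventually_lt_nhds h] with t ht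
      rw [uy_eq u hu x t ht.ne, Real.sign_of_neg ht, abs_of_neg ht]
      ring
    have hd : HasDerivAt (fun t : ℝ => 3 * (-t) ^ ((1:ℝ)/3))
        (-(|y| ^ (-(2:ℝ)/3))) y := by
      have h1 : HasDerivAt (fun t : ℝ => (-t) ^ ((1:ℝ)/3))
          (((1:ℝ)/3 * (-y) ^ ((1:ℝ)/3 - 1)) * (-1)) y :=
        (Real.hasDerivAt_rpow_const (x := -y) (p := (1:ℝ)/3)
          (Or.inl (by linarith))).comp y (hasDerivAt_neg y)
      have := h1.const_mul (3 : ℝ)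
      refine this.congr_deriv (Eq.symm ?_)
      rw [abs_of_neg h]
      norm_num
      ring
    rw [uyy, heq.deriv_eq, hd.deriv]
  · have heq : (fun t => uy u x t) =ᶠ[nhds y] fun t => -3 * t ^ ((1:ℝ)/3) := by
      filter_upwards [eventually_gt_nhds h] with t ht
      rw [uy_eq u hu x t ht.ne', Real.sign_of_pos ht, abs_of_pos ht]
      ring
    have hd : HasDerivAt (fun t : ℝ => -3 * t ^ ((1:ℝ)/3)) (-(|y| ^ (-(2:ℝ)/3))) y := by
      have := (Real.hasDerivAt_rpow_const (x := y) (p := (1:ℝ)/3) (Or.inl h.ne')).const_mul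
        (-3 : ℝ)
      refine this.congr_deriv (Eq.symm ?_)
      rw [abs_of_pos h]
      norm_num
      ring
    rw [uyy, heq.deriv_eq, hd.deriv]

theorem stmt16 (u : ℝ → ℝ → ℝ)
    (hu : ∀ x y : ℝ, u x y = (9/4) * (|x| ^ ((4:ℝ)/3) - |y| ^ ((4:ℝ)/3))) :
    ∀ x y : ℝ, x ≠ 0 → y ≠ 0 →
      (ux u x y) ^ 2 * uxx u x y + 2 * ux u x y * uy u x y * uxy u x y +
      (uy u x y) ^ 2 * uyy u x y = 0 := by
  intro x y hx hy
  rw [ux_eq u hu x hx y, uy_eq u hu x y hy, uxx_eq u hu x hx y, uyy_eq u hu x y hy,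
    uxy_eq u hu x hx y]
  have h1 : |x| ^ ((1:ℝ)/3) * |x| ^ ((1:ℝ)/3) * |x| ^ (-(2:ℝ)/3) = 1 := by
    rw [← Real.rpow_add (abs_pos.2 hx), ← Real.rpow_add (abs_pos.2 hx)]
    norm_num
  have h2 : |y| ^ ((1:ℝ)/3) * |y| ^ ((1:ℝ)/3) * |y| ^ (-(2:ℝ)/3) = 1 := by
    rw [← Real.rpow_add (abs_pos.2 hy), ← Real.rpow_add (abs_pos.2 hy)]
    norm_num
  have hs : Real.sign x * Real.sign x = 1 := by
    rcases hx.lt_or_gt with h | h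
    · rw [Real.sign_of_neg h]; norm_num
    · rw [Real.sign_of_pos h]; norm_num
  have hs' : Real.sign y * Real.sign y = 1 := by
    rcases hy.lt_or_gt with h | h
    · rw [Real.sign_of_neg h]; norm_num
    · rw [Real.sign_of_pos h]; norm_num
  linear_combination (9 * (|x| ^ ((1:ℝ)/3)) * (|x| ^ ((1:ℝ)/3)) * (|x| ^ (-(2:ℝ)/3))) * hs +
    9 * h1 - (9 * (|y| ^ ((1:ℝ)/3)) * (|y| ^ ((1:ℝ)/3)) * (|y| ^ (-(2:ℝ)/3))) * hs' - 9 * h2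
end

section
/- Let c ∈ ℝ and let h, g ∈ C²(ℝ) satisfy (1 + h'(x)²)·h''(x) = c and (1 + g'(y)²)·g''(y) = −c for all x, y. Then u(x,y) = h(x) + g(y) satisfies (1 + u_x²)·u_xx + 2·u_x·u_y·u_xy + (1 + u_y²)·u_yy = 0 on ℝ²; moreover u is affine if and only if c = 0. -/
theorem stmt19 (c : ℝ) (h g : ℝ → ℝ) (hC : ContDiff ℝ 2 h) (gC : ContDiff ℝ 2 g)
    (hode : ∀ x : ℝ, (1 + (deriv h x) ^ 2) * deriv (deriv h) x = c)
    (gode : ∀ y : ℝ, (1 + (deriv g y) ^ 2) * deriv (deriv g) y = -c)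
    (u : ℝ → ℝ → ℝ) (hu : ∀ x y : ℝ, u x y = h x + g y) :
    (∀ x y : ℝ, (1 + (ux u x y) ^ 2) * uxx u x y +
      2 * ux u x y * uy u x y * uxy u x y +
      (1 + (uy u x y) ^ 2) * uyy u x y = 0) ∧
    (IsAffine u ↔ c = 0) := by
  have hux : ∀ x y : ℝ, ux u x y = deriv h x := by
    intro x y
    have : (fun t => u t y) = fun t => h t + g y := by funext t; exact hu t y
    simp [ux, this]
  have huy : ∀ x y : ℝ, uy u x y = deriv g y := by
    intro x y
    have : (fun t => u x t) = fun t => h x + g t := by funext t; exact hu x t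
    simp [uy, this]
  have huxx : ∀ x y : ℝ, uxx u x y = deriv (deriv h) x := by
    intro x y
    have : (fun t => ux u t y) = deriv h := by funext t; exact hux t y
    simp [uxx, this]
  have huxy : ∀ x y : ℝ, uxy u x y = 0 := by
    intro x y
    have : (fun t => ux u x t) = fun _ => deriv h x := by funext t; exact hux x t
    simp [uxy, this]
  have huyy : ∀ x y : ℝ, uyy u x y = deriv (deriv g) y := by
    intro x y
    have : (fun t => uy u x t) = deriv g := by funext t; exact huy x t
    simp [uyy, this]
  constructor
  · intro x y
    rw [hux, huy, huxx, huxy, huyy]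
    have := hode x
    have := gode y
    ring_nf
    nlinarith [hode x, gode y]
  · constructor
    · rintro ⟨a, b, d, hab⟩
      have hh : ∀ x : ℝ, h x = a * x + (d - g 0 + b * 0) := by
        intro x
        have := hab x 0
        rw [hu x 0] at this
        linarith
      have hfun : h = fun x => a * x + (d - g 0 + b * 0) := funext hh
      have hderiv : deriv h = fun _ => a := by
        rw [hfun]; funext x
        have : HasDerivAt (fun x : ℝ => a * x + (d - g 0 + b * 0)) a x := by
          simpa using ((hasDerivAt_id x).const_mul a).add_const (d - g 0 + b * 0)
        exact this.deriv
      have := hode 0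
      rw [hderiv] at this
      simpa using this.symm
    · intro hc
      subst hc
      have hdh : Differentiable ℝ h := hC.differentiable (by norm_num)
      have gdh : Differentiable ℝ g := gC.differentiable (by norm_num)
      have hC' : ContDiff ℝ 1 (deriv h) := by
        have := (contDiff_succ_iff_deriv (n := 1)).mp (by exact_mod_cast hC)
        exact this.2.2
      have gC' : ContDiff ℝ 1 (deriv g) := by
        have := (contDiff_succ_iff_deriv (n := 1)).mp (by exact_mod_cast gC)
        exact this.2.2
      have hd2 : Differentiable ℝ (deriv h) := hC'.differentiable one_ne_zero
      have gd2 : Differentiable ℝ (deriv g) := gC'.differentiable one_ne_zero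
      have hzero : ∀ x, deriv (deriv h) x = 0 := by
        intro x
        have := hode x
        nlinarith [sq_nonneg (deriv h x)]
      have gzero : ∀ y, deriv (deriv g) y = 0 := by
        intro y
        have := gode y
        nlinarith [sq_nonneg (deriv g y)]
      have hconst : ∀ x, deriv h x = deriv h 0 :=
        fun x => is_const_of_deriv_eq_zero hd2 hzero x 0
      have gconst : ∀ y, deriv g y = deriv g 0 :=
        fun y => is_const_of_deriv_eq_zero gd2 gzero y 0
      have haff : ∀ x : ℝ, h x = deriv h 0 * x + h 0 := by
        intro x
        have hF : Differentiable ℝ (fun x => h x - deriv h 0 * x) := by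
          exact hdh.sub ((differentiable_const _).mul differentiable_id)
        have hF0 : ∀ x, deriv (fun x => h x - deriv h 0 * x) x = 0 := by
          intro x
          have hm : DifferentiableAt ℝ (fun x : ℝ => deriv h 0 * x) x := by fun_prop
          have hm2 : deriv (fun x : ℝ => deriv h 0 * x) x = deriv h 0 := by
            simpa using ((hasDerivAt_id x).const_mul (deriv h 0)).deriv
          rw [deriv_fun_sub (hdh x) hm, hm2, hconst x, sub_self]
        have := is_const_of_deriv_eq_zero hF hF0 x 0
        simp at this
        linarith
      have gaff : ∀ y : ℝ, g y = deriv g 0 * y + g 0 := by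
        intro y
        have hF : Differentiable ℝ (fun y => g y - deriv g 0 * y) := by
          exact gdh.sub ((differentiable_const _).mul differentiable_id)
        have hF0 : ∀ y, deriv (fun y => g y - deriv g 0 * y) y = 0 := by
          intro y
          have hm : DifferentiableAt ℝ (fun y : ℝ => deriv g 0 * y) y := by fun_prop
          have hm2 : deriv (fun y : ℝ => deriv g 0 * y) y = deriv g 0 := by
            simpa using ((hasDerivAt_id y).const_mul (deriv g 0)).deriv
          rw [deriv_fun_sub (gdh y) hm, hm2, gconst y, sub_self]
        have := is_const_of_deriv_eq_zero hF hF0 y 0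
        simp at this
        linarith
      exact ⟨deriv h 0, deriv g 0, h 0 + g 0, fun x y => by
        rw [hu x y, haff x, gaff y]; ring⟩
end
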